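/- Let θ ≤ α ≤ β be infinite cardinals with 2^{<θ} = θ, and let λ be a cardinal with cf(2^θ) ≤ λ < 2^θ and θ < λ. Then there is no family F of at most 2^θ graphs, each of cardinality λ, such that every K_{α,β}-free graph of cardinality λ embeds as an induced subgraph into some member of F; in particular, the complexity of the class of K_{α,β}-free graphs of cardinality λ is greater than 2^θ. -/

import Mathlib

universe u

open Cardinal

/-- `G` is `K_{α,β}`-free: there are no sets `S`, `T` of vertices with `|S| = α`,
`|T| = β` and every vertex of `S` adjacent to every vertex of `T`. -/
def KBipartiteFree (α β : Cardinal.{u}) {V : Type u} (G : SimpleGraph V) : Prop :=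
  ¬ ∃ S T : Set V, #S = α ∧ #T = β ∧ ∀ s ∈ S, ∀ t ∈ T, G.Adj s t

namespace Stmt12Aux
open Ordinal

variable (θ : Cardinal.{u})

/-- node of the binary tree: a level `i < θ.ord` and a function on levels `≤ i`. -/
def Node : Type u := Σ i : θ.ord.ToType, ({j : θ.ord.ToType // j ≤ i} → Bool)

/-- restriction of a branch to levels `≤ i`. -/
def res (b : θ.ord.ToType → Bool) (i : θ.ord.ToType) : {j : θ.ord.ToType // j ≤ i} → Bool :=
  fun j => b j.1

/-- the node `n` lies on the branch `b`. -/
def inBr (b : θ.ord.ToType → Bool) (n : Node θ) : Prop := n.2 = res θ b n.1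

theorem branch_ext {b b' : θ.ord.ToType → Bool}
    (h : ∀ n, inBr θ b n ↔ inBr θ b' n) : b = b' := by
  funext j
  have h1 : inBr θ b' ⟨j, res θ b j⟩ := (h _).1 rfl
  exact congrFun h1 ⟨j, le_refl j⟩

theorem sep {b b' : θ.ord.ToType → Bool} (hbb : b ≠ b') :
    #{i : θ.ord.ToType // res θ b i = res θ b' i} < θ := by
  have hne : {o : θ.ord.ToType | b o ≠ b' o}.Nonempty := by
    by_contra h
    exact hbb (funext fun o => by
      by_contra ho
      exact h ⟨o, ho⟩)
  obtain ⟨i₀, hi₀, hmin⟩ := (@wellFounded_lt θ.ord.ToType _ _).has_min _ hne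
  have hsub : ∀ i : θ.ord.ToType, res θ b i = res θ b' i → i < i₀ := by
    intro i hi
    by_contra hlt
    exact hi₀ (congrFun hi ⟨i₀, not_lt.mp hlt⟩)
  calc #{i : θ.ord.ToType // res θ b i = res θ b' i}
      ≤ #(Set.Iio i₀) := mk_le_mk_of_subset (fun i hi => hsub i hi)
    _ < θ := mk_Iio_ord_toType i₀

theorem mk_node (hθ : ℵ₀ ≤ θ) (hpow : (2 : Cardinal.{u}) ^< θ = θ) : #(Node θ) ≤ θ := by
  have h1 : ∀ i : θ.ord.ToType, #({j : θ.ord.ToType // j ≤ i} → Bool) ≤ θ := by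
    intro i
    have hIic : #{j : θ.ord.ToType // j ≤ i} < θ := by
      have : #{j : θ.ord.ToType // j ≤ i} ≤ #(Set.Iio i) + 1 := by
        have : (Set.Iic i) = insert i (Set.Iio i) := by
          ext x; simp [le_iff_lt_or_eq, or_comm]
        calc #{j : θ.ord.ToType // j ≤ i} = #(Set.Iic i) := rfl
          _ = #(insert i (Set.Iio i) : Set _) := by rw [this]
          _ ≤ #(Set.Iio i) + 1 := mk_insert_le
      exact this.trans_lt (Cardinal.add_lt_of_lt hθ (mk_Iio_ord_toType i)
        (lt_of_lt_of_le Cardinal.one_lt_aleph0 hθ))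
    calc #({j : θ.ord.ToType // j ≤ i} → Bool)
        = (2 : Cardinal.{u}) ^ #{j : θ.ord.ToType // j ≤ i} := by
          rw [Cardinal.mk_arrow]; simp
      _ ≤ (2 : Cardinal.{u}) ^< θ := Cardinal.le_powerlt 2 hIic
      _ = θ := hpow
  calc #(Node θ) = Cardinal.sum (fun i : θ.ord.ToType => #({j : θ.ord.ToType // j ≤ i} → Bool)) :=
        Cardinal.mk_sigma _
    _ ≤ Cardinal.sum (fun _ : θ.ord.ToType => θ) := Cardinal.sum_le_sum _ _ h1
    _ = #θ.ord.ToType * θ := Cardinal.sum_const' _ _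
    _ = θ * θ := by rw [mk_ord_toType]
    _ = θ := Cardinal.mul_eq_self hθ

/-- nodes lying on two distinct branches are few. -/
theorem key {b₁ b₂ : θ.ord.ToType → Bool} (hb : b₁ ≠ b₂) {B : Set (Node θ)}
    (h1 : ∀ n ∈ B, inBr θ b₁ n) (h2 : ∀ n ∈ B, inBr θ b₂ n) : #B < θ := by
  have hinj : Function.Injective
      (fun n : ↥B => (⟨n.1.1, by
        have e1 := h1 n.1 n.2
        have e2 := h2 n.1 n.2
        rw [inBr] at e1 e2
        rw [← e1, ← e2]⟩ : {i : θ.ord.ToType // res θ b₁ i = res θ b₂ i})) := by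
    rintro ⟨⟨i, f⟩, hn⟩ ⟨⟨i', f'⟩, hn'⟩ h
    have hi : i = i' := congrArg Subtype.val h
    subst hi
    have e1 := h1 _ hn
    have e1' := h1 _ hn'
    unfold inBr at e1 e1'
    simp only at e1 e1'
    have : f = f' := e1.trans e1'.symm
    subst this
    rfl
  exact lt_of_le_of_lt (Cardinal.mk_le_of_injective hinj) (sep θ hb)

/-- the bipartite graph between tree nodes and a set `X` of branches. -/
def HX (X : Set (θ.ord.ToType → Bool)) : SimpleGraph (Node θ ⊕ ↥X) where
  Adj u v := match u, v with
    | .inl n, .inr x => inBr θ x.1 n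
    | .inr x, .inl n => inBr θ x.1 n
    | _, _ => False
  symm := ⟨by rintro (n | x) (m | y) h <;> simp_all⟩
  loopless := ⟨by rintro (n | x) h <;> exact h⟩

theorem HX_adj (X : Set (θ.ord.ToType → Bool)) (x : ↥X) (n : Node θ) :
    (HX θ X).Adj (Sum.inr x) (Sum.inl n) ↔ inBr θ x.1 n := Iff.rfl

theorem HX_free {α β : Cardinal.{u}} (hθ : ℵ₀ ≤ θ) (hθα : θ ≤ α) (hαβ : α ≤ β)
    (X : Set (θ.ord.ToType → Bool)) : KBipartiteFree α β (HX θ X) := by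
  rintro ⟨S, T, hS, hT, hadj⟩
  have hSne : S.Nonempty := by
    rw [← Set.nonempty_coe_sort, ← Cardinal.mk_ne_zero_iff, hS]
    exact fun h => by simp [h] at hθα; exact (hθα ▸ hθ).not_gt aleph0_pos
  have hTne : T.Nonempty := by
    rw [← Set.nonempty_coe_sort, ← Cardinal.mk_ne_zero_iff, hT]
    intro h
    rw [h] at hαβ
    exact ((hθ.trans hθα).trans hαβ).not_gt aleph0_pos
  obtain ⟨s₀, hs₀⟩ := hSne
  have twodist : ∀ (P : Set (Node θ ⊕ ↥X)), ℵ₀ ≤ #P →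
      (∀ p ∈ P, ∃ x : ↥X, p = Sum.inr x) →
      ∃ x₁ x₂ : ↥X, Sum.inr x₁ ∈ P ∧ Sum.inr x₂ ∈ P ∧ x₁.1 ≠ x₂.1 := by
    intro P hP hform
    have : (1 : Cardinal.{u}) < #P := lt_of_lt_of_le Cardinal.one_lt_aleph0 hP
    rw [Cardinal.one_lt_iff_nontrivial] at this
    obtain ⟨⟨p₁, hp₁⟩, ⟨p₂, hp₂⟩, hne⟩ := this
    obtain ⟨x₁, rfl⟩ := hform p₁ hp₁
    obtain ⟨x₂, rfl⟩ := hform p₂ hp₂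
    refine ⟨x₁, x₂, hp₁, hp₂, ?_⟩
    intro h
    exact hne (Subtype.ext (congrArg Sum.inr (Subtype.ext h)))
  cases s₀ with
  | inl n₀ =>
    have hTpts : ∀ t ∈ T, ∃ x : ↥X, t = Sum.inr x := by
      intro t ht
      have := hadj _ hs₀ t ht
      cases t with
      | inl m => exact absurd this (by intro h; exact h)
      | inr x => exact ⟨x, rfl⟩
    obtain ⟨x₁, x₂, hx₁, hx₂, hbne⟩ := twodist T (hT ▸ (hθ.trans hθα).trans hαβ) hTpts
    have hSn : ∀ s ∈ S, ∃ n : Node θ, s = Sum.inl n := by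
      intro s hs
      have := hadj s hs _ hx₁
      cases s with
      | inl n => exact ⟨n, rfl⟩
      | inr x => exact absurd this (by intro h; exact h)
    set B : Set (Node θ) := {n | Sum.inl n ∈ S} with hB
    have h1 : ∀ n ∈ B, inBr θ x₁.1 n := fun n hn => hadj _ hn _ hx₁
    have h2 : ∀ n ∈ B, inBr θ x₂.1 n := fun n hn => hadj _ hn _ hx₂
    have hle : #S ≤ #B := by
      refine Cardinal.mk_le_of_injective (f := fun s : ↥S =>
        (⟨(hSn s.1 s.2).choose, by
          have := (hSn s.1 s.2).choose_spec
          rw [hB]; simp only [Set.mem_setOf_eq, ← this]; exact s.2⟩ : ↥B)) ?_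
      rintro ⟨s, hs⟩ ⟨s', hs'⟩ h
      have e := (hSn s hs).choose_spec
      have e' := (hSn s' hs').choose_spec
      simp only [Subtype.mk.injEq] at h ⊢
      rw [e, e', h]
    have : α < θ := by
      rw [← hS]
      exact lt_of_le_of_lt hle (key θ hbne h1 h2)
    exact absurd hθα this.not_ge
  | inr x₀ =>
    have hSpts : ∀ s ∈ S, ∃ x : ↥X, s = Sum.inr x := by
      intro s hs
      obtain ⟨t₀, ht₀⟩ := hTne
      have hadj0 := hadj _ hs₀ t₀ ht₀
      cases t₀ with
      | inr y => exact absurd hadj0 (by intro h; exact h)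
      | inl m =>
        have := hadj s hs _ ht₀
        cases s with
        | inl n => exact absurd this (by intro h; exact h)
        | inr x => exact ⟨x, rfl⟩
    obtain ⟨x₁, x₂, hx₁, hx₂, hbne⟩ := twodist S (hS ▸ hθ.trans hθα) hSpts
    have hTn : ∀ t ∈ T, ∃ n : Node θ, t = Sum.inl n := by
      intro t ht
      have := hadj _ hx₁ t ht
      cases t with
      | inl n => exact ⟨n, rfl⟩
      | inr y => exact absurd this (by intro h; exact h)
    set B : Set (Node θ) := {n | Sum.inl n ∈ T} with hB
    have h1 : ∀ n ∈ B, inBr θ x₁.1 n := fun n hn => hadj _ hx₁ _ hn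
    have h2 : ∀ n ∈ B, inBr θ x₂.1 n := fun n hn => hadj _ hx₂ _ hn
    have hle : #T ≤ #B := by
      refine Cardinal.mk_le_of_injective (f := fun t : ↥T =>
        (⟨(hTn t.1 t.2).choose, by
          have := (hTn t.1 t.2).choose_spec
          rw [hB]; simp only [Set.mem_setOf_eq, ← this]; exact t.2⟩ : ↥B)) ?_
      rintro ⟨t, ht⟩ ⟨t', ht'⟩ h
      have e := (hTn t ht).choose_spec
      have e' := (hTn t' ht').choose_spec
      simp only [Subtype.mk.injEq] at h ⊢
      rw [e, e', h]
    have : β < θ := by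
      rw [← hT]
      exact lt_of_le_of_lt hle (key θ hbne h1 h2)
    exact absurd (hθα.trans hαβ) this.not_ge

theorem diag (lam : Cardinal.{u}) (hθ : ℵ₀ ≤ θ) (hlam : ℵ₀ ≤ lam)
    (hcf : ((2 : Cardinal.{u}) ^ θ).ord.cof ≤ lam) (hlt : lam < 2 ^ θ)
    {J : Type u} (hJ : #J ≤ 2 ^ θ) (A : J → Set (θ.ord.ToType → Bool))
    (hA : ∀ j, #(A j) ≤ lam) :
    ∃ X : Set (θ.ord.ToType → Bool), #X = lam ∧ ∀ j, ¬ X ⊆ A j := by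
  have hc : ℵ₀ ≤ (2 : Cardinal.{u}) ^ θ := hθ.trans (Cardinal.cantor θ).le
  have hBr : #(θ.ord.ToType → Bool) = 2 ^ θ := by
    rw [Cardinal.mk_arrow]; simp
  have instWO : IsWellOrder ((2 : Cardinal.{u}) ^ θ).ord.ToType (· < ·) := isWellOrder_lt
  set C := ((2 : Cardinal.{u}) ^ θ).ord.ToType with hC
  obtain ⟨inj⟩ : Nonempty (J ↪ C) := by
    rw [← Cardinal.le_def, mk_ord_toType]; exact hJ
  set U : C → Set (θ.ord.ToType → Bool) := fun γ => ⋃ j ∈ {j : J | inj j ≤ γ}, A j with hU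
  have hUcard : ∀ γ, #(U γ) < 2 ^ θ := by
    intro γ
    have h1 : #{j : J | inj j ≤ γ} ≤ #(Set.Iic γ) :=
      Cardinal.mk_le_of_injective (f := fun j : {j : J | inj j ≤ γ} => (⟨inj j.1, j.2⟩ : Set.Iic γ))
        (fun j j' h => Subtype.ext (inj.injective (congrArg Subtype.val h)))
    have h2 : #(Set.Iic γ) < 2 ^ θ := by
      have e : (Set.Iic γ) = insert γ (Set.Iio γ) := by
        ext x; simp [le_iff_lt_or_eq, or_comm]
      calc #(Set.Iic γ) = #(insert γ (Set.Iio γ) : Set C) := by rw [e]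
        _ ≤ #(Set.Iio γ) + 1 := mk_insert_le
        _ < 2 ^ θ := Cardinal.add_lt_of_lt hc (mk_Iio_ord_toType γ)
            (lt_of_lt_of_le Cardinal.one_lt_aleph0 hc)
    have h3 : #(U γ) ≤ #{j : J | inj j ≤ γ} * lam := by
      refine (Cardinal.mk_biUnion_le A {j : J | inj j ≤ γ}).trans ?_
      exact mul_le_mul_right (ciSup_le' fun (j : {j : J | inj j ≤ γ}) => hA j.1) _
    exact lt_of_le_of_lt h3 (Cardinal.mul_lt_of_lt hc (h1.trans_lt h2) hlt)
  have pick : ∀ γ : C, ∃ b, b ∉ U γ := by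
    intro γ
    by_contra h
    push_neg at h
    have : U γ = Set.univ := Set.eq_univ_of_forall h
    have h2 := hUcard γ
    rw [this, Cardinal.mk_univ, hBr] at h2
    exact h2.false
  choose bb hbb using pick
  obtain ⟨S, hSunb, hScard⟩ := Order.cof_eq C
  rw [show Order.cof C = ((2 : Cardinal.{u}) ^ θ).ord.cof from Ordinal.cof_toType _] at hScard
  have hSle : #S ≤ lam := hScard.le.trans hcf
  obtain ⟨Y, hY⟩ : ∃ Y : Set (θ.ord.ToType → Bool), #Y = lam := by
    rw [← Cardinal.le_mk_iff_exists_set, hBr]; exact hlt.le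
  refine ⟨(Set.range fun γ : ↥S => bb γ.1) ∪ Y, ?_, ?_⟩
  · apply le_antisymm
    · calc #((Set.range fun γ : ↥S => bb γ.1) ∪ Y : Set _)
          ≤ #(Set.range fun γ : ↥S => bb γ.1) + #Y := Cardinal.mk_union_le _ _
        _ ≤ lam + lam := add_le_add (Cardinal.mk_range_le.trans hSle) hY.le
        _ = lam := Cardinal.add_eq_self hlam
    · rw [← hY]; exact Cardinal.mk_le_mk_of_subset Set.subset_union_right
  · intro j hXA
    obtain ⟨γ, hγS, hγ⟩ := hSunb (inj j)
    have hbX : bb γ ∈ (Set.range fun γ : ↥S => bb γ.1) ∪ Y :=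
      Set.mem_union_left _ ⟨⟨γ, hγS⟩, rfl⟩
    have : bb γ ∈ U γ := by
      have := hXA hbX
      exact Set.mem_biUnion (show j ∈ {j : J | inj j ≤ γ} from hγ) this
    exact hbb γ this

end Stmt12Aux

open Stmt12Aux in
/-- For infinite cardinals `θ ≤ α ≤ β` with `2^{<θ} = θ` and `λ` with
`cf(2^θ) ≤ λ < 2^θ` and `θ < λ`, there is no family of at most `2^θ` graphs, each of
cardinality `λ`, embedding (as induced subgraphs) all `K_{α,β}`-free graphs of
cardinality `λ`; i.e. the complexity of the class of `K_{α,β}`-free graphs in power `λ`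
exceeds `2^θ`. -/
theorem stmt12 (θ α β lam : Cardinal.{u}) (hθ : ℵ₀ ≤ θ) (hθα : θ ≤ α) (hαβ : α ≤ β)
    (hpow : (2 : Cardinal.{u}) ^< θ = θ)
    (hcf : ((2 : Cardinal.{u}) ^ θ).ord.cof ≤ lam) (hlt : lam < 2 ^ θ) (hθlam : θ < lam) :
    ¬ ∃ (ι : Type u) (V : ι → Type u) (G : ∀ i, SimpleGraph (V i)),
        #ι ≤ 2 ^ θ ∧ (∀ i, #(V i) = lam) ∧
        ∀ (W : Type u) (H : SimpleGraph W), #W = lam → KBipartiteFree α β H →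
          ∃ i, Nonempty (H ↪g G i) := by
  rintro ⟨ι, V, G, hι, hV, hcover⟩
  have hlam : ℵ₀ ≤ lam := hθ.trans hθlam.le
  have hlam0 : lam ≠ 0 := fun h => by rw [h] at hlam; exact hlam.not_gt aleph0_pos
  have hc : ℵ₀ ≤ (2 : Cardinal.{u}) ^ θ := hθ.trans (Cardinal.cantor θ).le
  have hN : #(Node θ) ≤ θ := mk_node θ hθ hpow
  set J := Σ i : ι, (Node θ → V i) with hJdef
  set A : J → Set (θ.ord.ToType → Bool) := fun j =>
    {b | ∃ v : V j.1, ∀ n : Node θ, (G j.1).Adj v (j.2 n) ↔ inBr θ b n} with hAdef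
  have hA : ∀ j, #(A j) ≤ lam := by
    intro j
    rw [← hV j.1]
    refine Cardinal.mk_le_of_injective (f := fun b : ↥(A j) => b.2.choose) ?_
    intro b b' h
    have s1 := b.2.choose_spec
    have s2 := b'.2.choose_spec
    rw [show b.2.choose = b'.2.choose from h] at s1
    exact Subtype.ext (branch_ext θ fun n => ((s1 n).symm.trans (s2 n)))
  have hJ : #J ≤ 2 ^ θ := by
    have h1 : ∀ i : ι, #(Node θ → V i) ≤ 2 ^ θ := by
      intro i
      calc #(Node θ → V i) = #(V i) ^ #(Node θ) := by
            rw [Cardinal.mk_arrow, Cardinal.lift_id, Cardinal.lift_id]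
        _ ≤ lam ^ θ := by
            rw [hV i]
            exact Cardinal.power_le_power_left hlam0 hN
        _ ≤ ((2 : Cardinal.{u}) ^ θ) ^ θ := Cardinal.power_le_power_right hlt.le
        _ = (2 : Cardinal.{u}) ^ (θ * θ) := Cardinal.power_mul.symm
        _ = 2 ^ θ := by rw [Cardinal.mul_eq_self hθ]
    calc #J = Cardinal.sum fun i : ι => #(Node θ → V i) := Cardinal.mk_sigma _
      _ ≤ Cardinal.sum fun _ : ι => (2 : Cardinal.{u}) ^ θ := Cardinal.sum_le_sum _ _ h1
      _ = #ι * 2 ^ θ := Cardinal.sum_const' _ _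
      _ ≤ (2 ^ θ) * 2 ^ θ := mul_le_mul_left hι _
      _ = 2 ^ θ := Cardinal.mul_eq_self hc
  obtain ⟨X, hX, hnot⟩ := diag θ lam hθ hlam hcf hlt hJ A hA
  have hW : #(Node θ ⊕ ↥X) = lam := by
    rw [Cardinal.mk_sum, Cardinal.lift_id, Cardinal.lift_id, hX]
    exact Cardinal.add_eq_right hlam (hN.trans hθlam.le)
  obtain ⟨i, ⟨f⟩⟩ := hcover _ (HX θ X) hW (HX_free θ hθ hθα hαβ X)
  refine hnot ⟨i, fun n => f (Sum.inl n)⟩ ?_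
  intro b hb
  refine ⟨f (Sum.inr ⟨b, hb⟩), fun n => ?_⟩
  rw [f.map_adj_iff]
  exact HX_adj θ X ⟨b, hb⟩ n
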